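/- For closed sets P, Q ⊆ 2^ω, the Cantor-Bendixson derivative of P ⊗ Q satisfies D(P ⊗ Q) = (D(P) ⊗ Q) ∪ (P ⊗ D(Q)). -/
import Mathlib

open Set Topology Filter

abbrev Cantor : Type := ℕ → Bool

def join (X Y : Cantor) : Cantor := fun n => if n % 2 = 0 then X (n / 2) else Y (n / 2)

def IsolatedIn {α : Type*} [TopologicalSpace α] (x : α) (S : Set α) : Prop :=
  ∃ U : Set α, IsOpen U ∧ U ∩ S = {x}

def cbDeriv {α : Type*} [TopologicalSpace α] (S : Set α) : Set α :=
  {x ∈ S | x ∈ closure (S \ {x})}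

noncomputable def cbIter {X : Type*} [TopologicalSpace X] (P : Set X) (α : Ordinal) : Set X :=
  Ordinal.limitRecOn α P (fun _ S => cbDeriv S) (fun o _ ih => ⋂ β : {β // β < o}, ih β.1 β.2)

noncomputable def joinHomeo : Cantor × Cantor ≃ₜ Cantor where
  toFun p := join p.1 p.2
  invFun Z := (fun n => Z (2 * n), fun n => Z (2 * n + 1))
  left_inv p := by
    ext n
    · simp [_root_.join, Nat.mul_div_cancel_left, Nat.mul_mod_right]
    · have h1 : (2 * n + 1) % 2 = 1 := by omega
      have h2 : (2 * n + 1) / 2 = n := by omega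
      simp [_root_.join, h1, h2]
  right_inv Z := by
    funext n
    rcases Nat.even_or_odd n with ⟨k, hk⟩ | ⟨k, hk⟩
    · have h1 : n % 2 = 0 := by omega
      have h2 : 2 * (n / 2) = n := by omega
      simp [_root_.join, h1, h2]
    · have h1 : n % 2 ≠ 0 := by omega
      have h2 : 2 * (n / 2) + 1 = n := by omega
      simp [_root_.join, h1, h2]
  continuous_toFun := by
    refine continuous_pi fun n => ?_
    show Continuous fun a : Cantor × Cantor => if n % 2 = 0 then a.1 (n / 2) else a.2 (n / 2)
    split_ifs
    · exact (continuous_apply (n / 2)).comp continuous_fst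
    · exact (continuous_apply (n / 2)).comp continuous_snd
  continuous_invFun := by
    refine Continuous.prodMk ?_ ?_
    · exact continuous_pi fun n => continuous_apply _
    · exact continuous_pi fun n => continuous_apply _

lemma cbDeriv_image {α β : Type*} [TopologicalSpace α] [TopologicalSpace β]
    (e : α ≃ₜ β) (S : Set α) : cbDeriv (e '' S) = e '' cbDeriv S := by
  ext z
  constructor
  · rintro ⟨⟨x, hxS, rfl⟩, hcl⟩
    refine ⟨x, ⟨hxS, ?_⟩, rfl⟩
    have : (e '' S) \ {e x} = e '' (S \ {x}) := by
      rw [← image_singleton, ← image_diff e.injective]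
    rw [this, ← e.image_closure] at hcl
    rcases hcl with ⟨y, hy, hxy⟩
    rwa [e.injective hxy] at hy
  · rintro ⟨x, ⟨hxS, hcl⟩, rfl⟩
    refine ⟨⟨x, hxS, rfl⟩, ?_⟩
    have : (e '' S) \ {e x} = e '' (S \ {x}) := by
      rw [← image_singleton, ← image_diff e.injective]
    rw [this, ← e.image_closure]
    exact ⟨x, hcl, rfl⟩

lemma cbDeriv_prod {α β : Type*} [TopologicalSpace α] [TopologicalSpace β]
    (P : Set α) (Q : Set β) :
    cbDeriv (P ×ˢ Q) = (cbDeriv P ×ˢ Q) ∪ (P ×ˢ cbDeriv Q) := by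
  ext ⟨x, y⟩
  simp only [cbDeriv, mem_setOf_eq, mem_union, mem_prod_eq, mem_sep_iff]
  constructor
  · rintro ⟨⟨hx, hy⟩, hcl⟩
    by_contra hcon
    have hx' : x ∉ closure (P \ {x}) := fun h => hcon (Or.inl ⟨⟨hx, h⟩, hy⟩)
    have hy' : y ∉ closure (Q \ {y}) := fun h => hcon (Or.inr ⟨hx, hy, h⟩)
    have hUx : (closure (P \ {x}))ᶜ ∈ 𝓝 x := isClosed_closure.isOpen_compl.mem_nhds hx'
    have hVy : (closure (Q \ {y}))ᶜ ∈ 𝓝 y := isClosed_closure.isOpen_compl.mem_nhds hy'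
    have hn : (closure (P \ {x}))ᶜ ×ˢ (closure (Q \ {y}))ᶜ ∈ 𝓝 (x, y) := by
      rw [nhds_prod_eq]; exact Filter.prod_mem_prod hUx hVy
    obtain ⟨⟨x', y'⟩, ⟨hxU, hyV⟩, ⟨hP', hQ'⟩, hne⟩ := mem_closure_iff_nhds.mp hcl _ hn
    have hx'' : x' = x := by
      by_contra h
      exact hxU (subset_closure ⟨hP', h⟩)
    have hy'' : y' = y := by
      by_contra h
      exact hyV (subset_closure ⟨hQ', h⟩)
    exact hne (by simp [hx'', hy''])
  · rintro (⟨⟨hx, hclx⟩, hy⟩ | ⟨hx, hy, hcly⟩)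
    · refine ⟨⟨hx, hy⟩, ?_⟩
      rw [mem_closure_iff_nhds] at hclx ⊢
      intro t ht
      rw [nhds_prod_eq, Filter.mem_prod_iff] at ht
      obtain ⟨u, hu, v, hv, huv⟩ := ht
      obtain ⟨x', hx'u, hx'P, hx'ne⟩ := hclx u hu
      refine ⟨(x', y), huv ⟨hx'u, mem_of_mem_nhds hv⟩, ⟨hx'P, hy⟩, fun h => hx'ne ?_⟩
      simp only [mem_singleton_iff, Prod.mk.injEq] at h
      simp [h.1]
    · refine ⟨⟨hx, hy⟩, ?_⟩
      rw [mem_closure_iff_nhds] at hcly ⊢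
      intro t ht
      rw [nhds_prod_eq, Filter.mem_prod_iff] at ht
      obtain ⟨u, hu, v, hv, huv⟩ := ht
      obtain ⟨y', hy'v, hy'Q, hy'ne⟩ := hcly v hv
      refine ⟨(x, y'), huv ⟨mem_of_mem_nhds hu, hy'v⟩, ⟨hx, hy'Q⟩, fun h => hy'ne ?_⟩
      simp only [mem_singleton_iff, Prod.mk.injEq] at h
      simp [h.2]

/-- For closed `P, Q ⊆ 2^ω`, `D(P ⊗ Q) = (D(P) ⊗ Q) ∪ (P ⊗ D(Q))`. -/
theorem cbDeriv_otimes (P Q : Set Cantor) (hP : IsClosed P) (hQ : IsClosed Q) :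
    cbDeriv {Z : Cantor | ∃ X ∈ P, ∃ Y ∈ Q, Z = join X Y}
      = {Z : Cantor | ∃ X ∈ cbDeriv P, ∃ Y ∈ Q, Z = join X Y}
        ∪ {Z : Cantor | ∃ X ∈ P, ∃ Y ∈ cbDeriv Q, Z = join X Y} := by
  have key : ∀ (A B : Set Cantor),
      {Z : Cantor | ∃ X ∈ A, ∃ Y ∈ B, Z = join X Y} = joinHomeo '' (A ×ˢ B) := by
    intro A B
    ext Z
    simp only [mem_setOf_eq, mem_image, mem_prod_eq, Prod.exists]
    constructor
    · rintro ⟨X, hX, Y, hY, rfl⟩; exact ⟨X, Y, ⟨hX, hY⟩, rfl⟩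
    · rintro ⟨X, Y, ⟨hX, hY⟩, rfl⟩; exact ⟨X, hX, Y, hY, rfl⟩
  rw [key, key, key, cbDeriv_image, cbDeriv_prod, image_union]
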